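/- (Corollary 3.2(d).) If S is independent of (R(1),R(0)), and in addition either (i) (Y(1),Y(0)) is independent of (R(1),R(0)), or (ii) (Y(1),Y(0)) is conditionally independent of (R(1),R(0)) given S, then theta_sfe = theta = E[Y(1) - Y(0)]. -/

import Mathlib

open MeasureTheory ProbabilityTheory

/-- Corollary 3.2(d): if `S` is independent of `(R(1), R(0))`, and in addition either
(i) `(Y(1), Y(0))` is independent of `(R(1), R(0))`, or (ii) `(Y(1), Y(0))` is conditionally
independent of `(R(1), R(0))` given `S`, then `θ_sfe = θ = E[Y(1) - Y(0)]`.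
Here `q d` and `qy d` are versions of `E[R(d)|S=·]` and `E[R(d)Y(d)|S=·]`. -/
theorem corollary_3_2_d
    {Ω : Type*} [MeasurableSpace Ω] [StandardBorelSpace Ω] [Nonempty Ω]
    (μ : Measure Ω) [IsProbabilityMeasure μ]
    {𝒮 : Type*} [Fintype 𝒮] [MeasurableSpace 𝒮] [MeasurableSingletonClass 𝒮]
    (Y : Fin 2 → Ω → ℝ) (R : Fin 2 → Ω → ℝ) (S : Ω → 𝒮)
    (hYmeas : ∀ d, Measurable (Y d)) (hRmeas : ∀ d, Measurable (R d))
    (hSmeas : Measurable S)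
    (hR01 : ∀ d ω, R d ω = 0 ∨ R d ω = 1)
    (hYint : ∀ d, Integrable (Y d) μ)
    (hRpos : ∀ d, 0 < ∫ ω, R d ω ∂μ)
    (ν : ℝ) (hν : 0 < ν ∧ ν < 1)
    (hle : MeasurableSpace.comap S inferInstance ≤ ‹MeasurableSpace Ω›)
    (q : Fin 2 → 𝒮 → ℝ) (qy : Fin 2 → 𝒮 → ℝ)
    (hq : ∀ d, μ[R d | MeasurableSpace.comap S inferInstance]
      =ᵐ[μ] fun ω => q d (S ω))
    (hqy : ∀ d, μ[fun ω => R d ω * Y d ω | MeasurableSpace.comap S inferInstance]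
      =ᵐ[μ] fun ω => qy d (S ω))
    (Λ : ℝ)
    (hΛ : Λ = ∫ ω, q 1 (S ω) * q 0 (S ω) / (ν * q 1 (S ω) + (1 - ν) * q 0 (S ω)) ∂μ)
    (hΛpos : 0 < Λ)
    (hindepS : IndepFun S (fun ω => (R 1 ω, R 0 ω)) μ)
    (heither : IndepFun (fun ω => (Y 1 ω, Y 0 ω)) (fun ω => (R 1 ω, R 0 ω)) μ ∨
      CondIndepFun (MeasurableSpace.comap S inferInstance) hle
        (fun ω => (Y 1 ω, Y 0 ω)) (fun ω => (R 1 ω, R 0 ω)) μ) :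
    Λ⁻¹ * ∫ ω, (qy 1 (S ω) * q 0 (S ω) - qy 0 (S ω) * q 1 (S ω))
        / (ν * q 1 (S ω) + (1 - ν) * q 0 (S ω)) ∂μ
      = ∫ ω, (Y 1 ω - Y 0 ω) ∂μ := by
  set Rp : Ω → ℝ × ℝ := fun ω => (R 1 ω, R 0 ω) with hRp
  set Yp : Ω → ℝ × ℝ := fun ω => (Y 1 ω, Y 0 ω) with hYp
  have hRpm : Measurable Rp := (hRmeas 1).prodMk (hRmeas 0)
  have hYpm : Measurable Yp := (hYmeas 1).prodMk (hYmeas 0)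
  have hleR : MeasurableSpace.comap Rp inferInstance ≤ ‹MeasurableSpace Ω› :=
    hRpm.comap_le
  -- projections
  have hproj : ∀ d : Fin 2, ∃ π : ℝ × ℝ → ℝ, Measurable π ∧ R d = π ∘ Rp ∧ Y d = π ∘ Yp := by
    intro d
    fin_cases d
    · exact ⟨Prod.snd, measurable_snd, rfl, rfl⟩
    · exact ⟨Prod.fst, measurable_fst, rfl, rfl⟩
  -- bounds on R
  have hRabs : ∀ d ω, |R d ω| ≤ 1 := by
    intro d ω; rcases hR01 d ω with h | h <;> rw [h] <;> norm_num
  have hRint : ∀ d, Integrable (R d) μ := by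
    intro d
    refine (integrable_const (1 : ℝ)).mono' (hRmeas d).aestronglyMeasurable ?_
    exact Filter.Eventually.of_forall fun ω => by simpa using hRabs d ω
  have hRYint : ∀ d, Integrable (fun ω => R d ω * Y d ω) μ := by
    intro d
    exact (hYint d).bdd_mul (hRmeas d).aestronglyMeasurable
      (c := 1) (Filter.Eventually.of_forall fun ω => by simpa using hRabs d ω)
  -- either case gives full independence of pairs
  have hIndep : IndepFun Yp Rp μ := by
    rcases heither with h | h
    · exact h
    · rw [indepFun_iff_measure_inter_preimage_eq_mul]
      intro s t hs ht
      have hB : MeasurableSet (Yp ⁻¹' s) := hYpm hs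
      have hA : MeasurableSet (Rp ⁻¹' t) := hRpm ht
      have h1 := (condIndepFun_iff_condExp_inter_preimage_eq_mul (hm' := hle)
        hYpm hRpm).mp h s t hs ht
      have h2 : (μ⟦Rp ⁻¹' t | MeasurableSpace.comap S inferInstance⟧) =ᵐ[μ] fun _ => (μ (Rp ⁻¹' t)).toReal := by
        have hsm2 : StronglyMeasurable[MeasurableSpace.comap Rp inferInstance]
            ((Rp ⁻¹' t).indicator (fun _ => (1 : ℝ))) :=
          stronglyMeasurable_const.indicator ⟨t, ht, rfl⟩
        have h2' := condExp_indep_eq hleR hle hsm2 hindepS.symm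
        have : ∫ ω, (Rp ⁻¹' t).indicator (fun _ => (1:ℝ)) ω ∂μ = (μ (Rp ⁻¹' t)).toReal := by
          rw [integral_indicator_const (1:ℝ) hA]; simp [measureReal_def]
        rw [this] at h2'
        exact h2'
      have h3 : (μ⟦Yp ⁻¹' s ∩ Rp ⁻¹' t | MeasurableSpace.comap S inferInstance⟧)
          =ᵐ[μ] fun ω => (μ⟦Yp ⁻¹' s | MeasurableSpace.comap S inferInstance⟧) ω * (μ (Rp ⁻¹' t)).toReal := by
        filter_upwards [h1, h2] with ω hω1 hω2
        rw [hω1, hω2]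
      have key : (μ (Yp ⁻¹' s ∩ Rp ⁻¹' t)).toReal
          = (μ (Yp ⁻¹' s)).toReal * (μ (Rp ⁻¹' t)).toReal := by
        have e1 : ∫ ω, (μ⟦Yp ⁻¹' s ∩ Rp ⁻¹' t | MeasurableSpace.comap S inferInstance⟧) ω ∂μ
            = (μ (Yp ⁻¹' s ∩ Rp ⁻¹' t)).toReal := by
          rw [integral_condExp hle, integral_indicator_const (1:ℝ) (hB.inter hA)]; simp [measureReal_def]
        rw [← e1, integral_congr_ae h3, integral_mul_const, integral_condExp hle,
          integral_indicator_const (1:ℝ) hB]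
        simp [measureReal_def]
      rw [← ENNReal.toReal_mul] at key
      exact (ENNReal.toReal_eq_toReal_iff' (measure_ne_top μ _)
        (ENNReal.mul_ne_top (measure_ne_top μ _) (measure_ne_top μ _))).mp key
  -- componentwise independence
  have hYR : ∀ d : Fin 2, IndepFun (R d) (Y d) μ := by
    intro d
    obtain ⟨π, hπ, hRd, hYd⟩ := hproj d
    rw [hRd, hYd]
    exact hIndep.symm.comp hπ hπ
  -- q is a.e. constant
  set p : Fin 2 → ℝ := fun d => ∫ ω, R d ω ∂μ with hp
  have hqconst : ∀ d : Fin 2, (fun ω => q d (S ω)) =ᵐ[μ] fun _ => p d := by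
    intro d
    obtain ⟨π, hπ, hRd, _⟩ := hproj d
    have hsm : StronglyMeasurable[MeasurableSpace.comap Rp inferInstance] (R d) := by
      rw [hRd]
      exact (hπ.comp (measurable_iff_comap_le.mpr le_rfl)).stronglyMeasurable
    exact (hq d).symm.trans (condExp_indep_eq hleR hle hsm hindepS.symm)
  -- integral of qy ∘ S
  have hqyint : ∀ d : Fin 2, Integrable (fun ω => qy d (S ω)) μ := by
    intro d; exact integrable_condExp.congr (hqy d)
  have hqyS : ∀ d : Fin 2, ∫ ω, qy d (S ω) ∂μ = p d * ∫ ω, Y d ω ∂μ := by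
    intro d
    calc ∫ ω, qy d (S ω) ∂μ
        = ∫ ω, (μ[fun ω => R d ω * Y d ω | MeasurableSpace.comap S inferInstance]) ω ∂μ := (integral_congr_ae (hqy d)).symm
      _ = ∫ ω, R d ω * Y d ω ∂μ := integral_condExp hle
      _ = p d * ∫ ω, Y d ω ∂μ := (hYR d).integral_mul_eq_mul_integral (hRmeas d).aestronglyMeasurable (hYmeas d).aestronglyMeasurable
  -- positivity
  have hp1 : 0 < p 1 := hRpos 1
  have hp0 : 0 < p 0 := hRpos 0
  have hD : 0 < ν * p 1 + (1 - ν) * p 0 :=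
    add_pos (mul_pos hν.1 hp1) (mul_pos (by linarith [hν.2]) hp0)
  set D : ℝ := ν * p 1 + (1 - ν) * p 0 with hDdef
  -- value of Λ
  have hΛval : Λ = p 1 * p 0 / D := by
    rw [hΛ]
    have e : (fun ω => q 1 (S ω) * q 0 (S ω) / (ν * q 1 (S ω) + (1 - ν) * q 0 (S ω)))
        =ᵐ[μ] fun _ => p 1 * p 0 / D := by
      filter_upwards [hqconst 1, hqconst 0] with ω h1 h0
      rw [h1, h0]
    rw [integral_congr_ae e, integral_const]
    simp
  -- value of the numerator
  have hnum : ∫ ω, (qy 1 (S ω) * q 0 (S ω) - qy 0 (S ω) * q 1 (S ω))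
      / (ν * q 1 (S ω) + (1 - ν) * q 0 (S ω)) ∂μ
      = ((p 1 * ∫ ω, Y 1 ω ∂μ) * p 0 - (p 0 * ∫ ω, Y 0 ω ∂μ) * p 1) / D := by
    have e : (fun ω => (qy 1 (S ω) * q 0 (S ω) - qy 0 (S ω) * q 1 (S ω))
        / (ν * q 1 (S ω) + (1 - ν) * q 0 (S ω)))
        =ᵐ[μ] fun ω => (qy 1 (S ω) * p 0 - qy 0 (S ω) * p 1) / D := by
      filter_upwards [hqconst 1, hqconst 0] with ω h1 h0
      rw [h1, h0]
    rw [integral_congr_ae e]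
    rw [integral_div, integral_sub ((hqyint 1).mul_const _) ((hqyint 0).mul_const _),
      integral_mul_const, integral_mul_const, hqyS 1, hqyS 0]
  rw [hnum, hΛval, integral_sub (hYint 1) (hYint 0)]
  field_simp
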